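/- Suppose f + 1 = λm and let χ be a multiplicative character of order m on F_q. Then M_{q,m} is a (q, f + 1, λ)-difference set in F_q if and only if Σ_{t=1}^{m−1} J_q(χ^s, χ^t) = 1 − m − m·χ^s(−1) for every s = 1, ..., m − 1. -/

import Mathlib

open Finset in
/-- `D` is a `(q, k, l)`-difference set in the additive group `F` (with `q = |F|`). -/
def IsDiffSet {F : Type*} [AddGroup F] (D : Set F) (k l : ℕ) : Prop :=
  D.ncard = k ∧
    ∀ a : F, a ≠ 0 → {x : F × F | x.1 ∈ D ∧ x.2 ∈ D ∧ x.1 - x.2 = a}.ncard = l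

/-- The set of nonzero `m`-th powers in `F`. -/
def Hset (F : Type*) [Field F] (m : ℕ) : Set F :=
  {x : F | x ≠ 0 ∧ ∃ y : F, y ^ m = x}

/-- The set of `m`-th powers in `F`, including `0`. -/
def Mset (F : Type*) [Field F] (m : ℕ) : Set F :=
  Hset F m ∪ {0}

/-- The Jacobi sum `J_q(χ, ψ) = ∑ α ∈ F_q, χ(α) ψ(1 - α)`. -/
noncomputable def Jsum {F : Type*} [Field F] [Fintype F] (χ ψ : MulChar F ℂ) : ℂ :=
  ∑ α : F, χ α * ψ (1 - α)

open Finset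
open scoped Classical
set_option linter.unusedSectionVars false
set_option linter.unusedVariables false
set_option maxHeartbeats 1000000

lemma Jsum_eq_jacobiSum {F : Type*} [Field F] [Fintype F] (χ ψ : MulChar F ℂ) :
    Jsum χ ψ = jacobiSum χ ψ := rfl

section Aux
variable {F : Type*} [Field F] [Fintype F]

lemma mulchar_ne_zero (χ : MulChar F ℂ) {a : F} (ha : a ≠ 0) : χ a ≠ 0 := by
  intro h
  have h2 : χ a * χ a⁻¹ = 1 := by rw [← map_mul, mul_inv_cancel₀ ha, map_one]
  rw [h, zero_mul] at h2; exact zero_ne_one h2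

lemma mulchar_neg_one_sq (χ : MulChar F ℂ) : χ (-1) * χ (-1) = 1 := by
  rw [← map_mul, neg_mul_neg, one_mul, map_one]

lemma jacobi_shift (χ ψ : MulChar F ℂ) :
    jacobiSum χ ψ = χ (-1) * jacobiSum ((χ * ψ)⁻¹) χ := by
  classical
  rw [jacobiSum, jacobiSum, mul_sum]
  have L : ∑ x : F, χ x * ψ (1 - x) = ∑ x ∈ univ.erase (1:F), χ x * ψ (1 - x) :=
    (Finset.sum_erase _ (by simp [MulChar.map_zero])).symm
  have R : ∑ x : F, χ (-1) * ((χ * ψ)⁻¹ x * χ (1 - x))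
      = ∑ x ∈ univ.erase (0:F), χ (-1) * ((χ * ψ)⁻¹ x * χ (1 - x)) :=
    (Finset.sum_erase _ (by simp [MulChar.map_zero])).symm
  rw [L, R]
  refine Finset.sum_nbij' (fun a => (1 - a)⁻¹) (fun b => 1 - b⁻¹) ?_ ?_ ?_ ?_ ?_
  · intro a ha
    simp only [mem_erase, mem_univ, and_true] at ha ⊢
    exact inv_ne_zero (sub_ne_zero.2 (Ne.symm ha))
  · intro b hb
    simp only [mem_erase, mem_univ, and_true] at hb ⊢
    intro h
    exact hb (inv_eq_zero.mp (sub_eq_self.mp h))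
  · intro a ha
    show 1 - ((1 - a)⁻¹)⁻¹ = a
    rw [inv_inv, sub_sub_cancel]
  · intro b hb
    show (1 - (1 - b⁻¹))⁻¹ = b
    rw [sub_sub_cancel, inv_inv]
  · intro a ha
    simp only [mem_erase, mem_univ, and_true] at ha
    show χ a * ψ (1 - a) = χ (-1) * ((χ * ψ)⁻¹ ((1 - a)⁻¹) * χ (1 - (1 - a)⁻¹))
    by_cases h0 : a = 0
    · subst h0
      simp [MulChar.map_zero]
    · have h1 : (1:F) - a ≠ 0 := sub_ne_zero.2 (Ne.symm ha)
      have hb : ((1:F) - a)⁻¹ ≠ 0 := inv_ne_zero h1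
      have e0 : (1:F) - (1-a)⁻¹ = (-1) * (a * (1-a)⁻¹) := by field_simp; ring
      rw [e0, MulChar.inv_apply_eq_inv', MulChar.mul_apply, map_mul, map_mul, mul_inv]
      have e1 : ψ ((1-a)⁻¹) * ψ (1 - a) = 1 := by rw [← map_mul, inv_mul_cancel₀ h1, map_one]
      have e1' : (ψ ((1-a)⁻¹))⁻¹ = ψ (1-a) := inv_eq_of_mul_eq_one_right e1
      have e2 : χ (-1) * χ (-1) = 1 := mulchar_neg_one_sq χ
      have hχb : χ ((1-a)⁻¹) ≠ 0 := mulchar_ne_zero χ hb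
      rw [e1']
      have e3 : (χ ((1-a)⁻¹))⁻¹ * χ ((1-a)⁻¹) = 1 := inv_mul_cancel₀ hχb
      linear_combination (-(χ a * ψ (1-a))) * e3 + (-(χ a * ψ (1-a)) * ((χ ((1-a)⁻¹))⁻¹ * χ ((1-a)⁻¹))) * e2

lemma order_val_gen (χ : MulChar F ℂ) (g : Fˣ) (hg : ∀ x : Fˣ, x ∈ Subgroup.zpowers g) :
    orderOf (χ (g : F)) = orderOf χ := by
  rw [orderOf_eq_orderOf_iff]
  intro n
  constructor
  · intro h
    refine MulChar.ext fun u => ?_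
    obtain ⟨k, hk'⟩ := (mem_powers_iff_mem_zpowers).2 (hg u)
    have hk : g ^ k = u := hk'
    rw [MulChar.pow_apply_coe, MulChar.one_apply_coe, ← hk]
    push_cast
    rw [map_pow, ← pow_mul, mul_comm, pow_mul, h, one_pow]
  · intro h
    rw [← MulChar.one_apply_coe g, ← h, MulChar.pow_apply_coe]

lemma mth_power_iff' {m : ℕ} (hm : 0 < m)
    (χ : MulChar F ℂ) (hχ : orderOf χ = m) {x : F} (hx : x ≠ 0) :
    χ x = 1 ↔ ∃ y : F, y ^ m = x := by
  obtain ⟨g, hg⟩ := IsCyclic.exists_generator (α := Fˣ)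
  have hog : orderOf (χ (g : F)) = m := by rw [order_val_gen χ g hg, hχ]
  constructor
  · intro h
    lift x to Fˣ using isUnit_iff_ne_zero.2 hx with u
    obtain ⟨k, hk'⟩ := (mem_powers_iff_mem_zpowers).2 (hg u)
    have hk : g ^ k = u := hk'
    have h1 : (χ (g : F)) ^ k = 1 := by
      rw [← map_pow, ← Units.val_pow_eq_pow_val, hk, h]
    obtain ⟨j, hj⟩ := (orderOf_dvd_iff_pow_eq_one.2 h1)
    refine ⟨((g : F) ^ j), ?_⟩
    rw [← pow_mul, ← hog, mul_comm j, ← hj, ← hk]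
    push_cast
    ring
  · rintro ⟨y, rfl⟩
    have hy : y ≠ 0 := by
      intro h
      rw [h, zero_pow hm.ne'] at hx
      exact hx rfl
    rw [map_pow, ← MulChar.pow_apply' χ hm.ne', ← hχ, pow_orderOf_eq_one,
      MulChar.one_apply (isUnit_iff_ne_zero.2 hy)]

lemma chi_pow_ne_one {m : ℕ} (χ : MulChar F ℂ) (hχ : orderOf χ = m) {s : ℕ}
    (hs : 1 ≤ s) (hsm : s < m) : χ ^ s ≠ 1 :=
  pow_ne_one_of_lt_orderOf (by omega) (by rw [hχ]; exact hsm)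

lemma chi_pow_inv {m : ℕ} (χ : MulChar F ℂ) (hχ : orderOf χ = m) {s : ℕ} (hsm : s ≤ m) :
    χ ^ (m - s) = (χ ^ s)⁻¹ := by
  refine eq_inv_of_mul_eq_one_left ?_
  rw [← pow_add]
  have : m - s + s = m := by omega
  rw [this, ← hχ, pow_orderOf_eq_one]

lemma mod_c1 {m s t : ℕ} (hm : 0 < m) (hs : s < m) (ht : t < m) :
    (m + (s + t) % m - s) % m = t := by
  rcases lt_or_ge (s + t) m with h | h
  · rw [Nat.mod_eq_of_lt h]
    have e : m + (s + t) - s = m + t := by omega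
    rw [e, Nat.add_mod_left, Nat.mod_eq_of_lt ht]
  · have e1 : (s + t) % m = s + t - m := by
      rw [Nat.mod_eq_sub_mod h, Nat.mod_eq_of_lt (by omega)]
    rw [e1]
    have e2 : m + (s + t - m) - s = t := by omega
    rw [e2, Nat.mod_eq_of_lt ht]

lemma mod_c2 {m s r : ℕ} (hm : 0 < m) (hs : s < m) (hr : r < m) :
    (s + (m + r - s) % m) % m = r := by
  rcases le_or_gt s r with h | h
  · have e1 : (m + r - s) % m = r - s := by
      rw [Nat.mod_eq_sub_mod (by omega)]
      have e : m + r - s - m = r - s := by omega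
      rw [e, Nat.mod_eq_of_lt (by omega)]
    rw [e1]
    have e2 : s + (r - s) = r := by omega
    rw [e2, Nat.mod_eq_of_lt hr]
  · have e1 : (m + r - s) % m = m + r - s := Nat.mod_eq_of_lt (by omega)
    rw [e1]
    have e2 : s + (m + r - s) = m + r := by omega
    rw [e2, Nat.add_mod_left, Nat.mod_eq_of_lt hr]

lemma tau_mem {m r s : ℕ} (hm : 0 < m) (hr1 : 1 ≤ r) (hr : r < m)
    (hs : s ∈ (Finset.Ico 1 m).erase r) : (m + r - s) % m ∈ (Finset.Ico 1 m).erase r := by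
  simp only [mem_erase, mem_Ico] at hs ⊢
  obtain ⟨hsr, hs1, hsm⟩ := hs
  rcases le_or_gt s r with h | h
  · have h' : s < r := lt_of_le_of_ne h hsr
    have e1 : (m + r - s) % m = r - s := by
      rw [Nat.mod_eq_sub_mod (by omega)]
      have e : m + r - s - m = r - s := by omega
      rw [e, Nat.mod_eq_of_lt (by omega)]
    rw [e1]; omega
  · have e1 : (m + r - s) % m = m + r - s := Nat.mod_eq_of_lt (by omega)
    rw [e1]; omega

lemma tau_invol {m r s : ℕ} (hm : 0 < m) (hr1 : 1 ≤ r) (hr : r < m)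
    (hs : s ∈ (Finset.Ico 1 m).erase r) : (m + r - (m + r - s) % m) % m = s := by
  simp only [mem_erase, mem_Ico] at hs
  obtain ⟨hsr, hs1, hsm⟩ := hs
  rcases le_or_gt s r with h | h
  · have h' : s < r := lt_of_le_of_ne h hsr
    have e1 : (m + r - s) % m = r - s := by
      rw [Nat.mod_eq_sub_mod (by omega)]
      have e : m + r - s - m = r - s := by omega
      rw [e, Nat.mod_eq_of_lt (by omega)]
    rw [e1]
    have e2 : m + r - (r - s) = m + s := by omega
    rw [e2, Nat.add_mod_left, Nat.mod_eq_of_lt hsm]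
  · have e1 : (m + r - s) % m = m + r - s := Nat.mod_eq_of_lt (by omega)
    rw [e1]
    have e2 : m + r - (m + r - s) = s := by omega
    rw [e2, Nat.mod_eq_of_lt hsm]


lemma mem_Mset_iff {m : ℕ} (hm : 0 < m) {x : F} (hx : x ≠ 0) :
    x ∈ Mset F m ↔ ∃ y : F, y ^ m = x := by
  simp [Mset, Hset, hx]

lemma zero_mem_Mset (m : ℕ) : (0 : F) ∈ Mset F m := Or.inr rfl


/-- indicator lemma -/
lemma indicator_eq {m : ℕ} (hm : 0 < m) (χ : MulChar F ℂ) (hχ : orderOf χ = m) (x : F) :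
    (if x ∈ Mset F m then (m : ℂ) else 0)
      = (if x = 0 then (m : ℂ) else 0) + ∑ t ∈ range m, (χ ^ t) x := by
  classical
  by_cases hx : x = 0
  · subst hx
    rw [if_pos (zero_mem_Mset m), if_pos rfl]
    have : ∀ t ∈ range m, (χ ^ t) (0 : F) = 0 := fun t _ =>
      MulChar.map_nonunit _ (by simp)
    rw [Finset.sum_congr rfl this, Finset.sum_const, smul_zero, add_zero]
  · have hsum : ∑ t ∈ range m, (χ ^ t) x = ∑ t ∈ range m, (χ x) ^ t := by
      refine Finset.sum_congr rfl fun t _ => ?_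
      rcases Nat.eq_zero_or_pos t with rfl | ht
      · rw [pow_zero, pow_zero, MulChar.one_apply (isUnit_iff_ne_zero.2 hx)]
      · exact MulChar.pow_apply' χ ht.ne' x
    rw [if_neg hx, hsum]
    by_cases hmem : x ∈ Mset F m
    · have h1 : χ x = 1 := by
        rw [mth_power_iff' hm χ hχ hx]
        exact (mem_Mset_iff hm hx).1 hmem
      rw [if_pos hmem, h1]
      simp
    · have h1 : χ x ≠ 1 := by
        intro h
        exact hmem ((mem_Mset_iff hm hx).2 ((mth_power_iff' hm χ hχ hx).1 h))
      have hxm : (χ x) ^ m = 1 := by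
        rw [← MulChar.pow_apply' χ hm.ne', ← hχ, pow_orderOf_eq_one,
          MulChar.one_apply (isUnit_iff_ne_zero.2 hx)]
      rw [if_neg hmem, geom_sum_eq h1, hxm, sub_self, zero_div, zero_add]

/-- the G-sum reindexing -/
lemma gsum_eq {a : F} (ha : a ≠ 0) (χ₁ χ₂ : MulChar F ℂ) :
    ∑ y : F, χ₁ (y + a) * χ₂ y = χ₁ a * χ₂ (-a) * jacobiSum χ₂ χ₁ := by
  rw [jacobiSum, Finset.mul_sum]
  have e : ∀ α : F, χ₁ (-a * α + a) * χ₂ (-a * α)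
      = χ₁ a * χ₂ (-a) * (χ₂ α * χ₁ (1 - α)) := by
    intro α
    have e1 : -a * α + a = a * (1 - α) := by ring
    rw [e1, map_mul, map_mul]
    ring
  calc ∑ y : F, χ₁ (y + a) * χ₂ y
      = ∑ α : F, χ₁ (-a * α + a) * χ₂ (-a * α) :=
        (Fintype.sum_equiv (Equiv.mulLeft₀ (-a) (neg_ne_zero.2 ha)) _ _ (fun α => rfl)).symm
    _ = ∑ α : F, χ₁ a * χ₂ (-a) * (χ₂ α * χ₁ (1 - α)) := Finset.sum_congr rfl fun α _ => e α

lemma innerSumAux {m : ℕ} (χ : MulChar F ℂ) (hχ : orderOf χ = m) (k : ℕ) :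
    ∑ a ∈ univ.erase (0 : F), (χ ^ k) a
      = if m ∣ k then ((Fintype.card F : ℂ) - 1) else 0 := by
  by_cases h : m ∣ k
  · have h1 : χ ^ k = 1 := orderOf_dvd_iff_pow_eq_one.mp (hχ ▸ h)
    rw [if_pos h]
    have : ∀ a ∈ univ.erase (0 : F), (χ ^ k) a = 1 := by
      intro a ha
      rw [h1, MulChar.one_apply (isUnit_iff_ne_zero.2 (mem_erase.1 ha).1)]
    rw [Finset.sum_congr rfl this, Finset.sum_const, nsmul_eq_mul, mul_one,
      Finset.card_erase_of_mem (mem_univ _), card_univ]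
    push_cast [Nat.cast_sub (Nat.one_le_iff_ne_zero.2 Fintype.card_ne_zero)]
    ring
  · have h1 : χ ^ k ≠ 1 := fun hc => h (hχ ▸ orderOf_dvd_iff_pow_eq_one.mpr hc)
    rw [if_neg h, Finset.sum_erase_eq_sub (mem_univ _),
      MulChar.sum_eq_zero_of_ne_one h1, MulChar.map_nonunit _ (by simp), sub_zero]

lemma coeff_extract {m f : ℕ} (hm : 0 < m) (hf : 0 < f)
    (hcard : Fintype.card F = m * f + 1)
    (χ : MulChar F ℂ) (hχ : orderOf χ = m) (d : ℕ → ℂ)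
    (h : ∀ a : F, a ≠ 0 → ∑ r ∈ range m, d r * (χ ^ r) a = 0) :
    ∀ r ∈ range m, d r = 0 := by
  intro r' hr'
  rw [mem_range] at hr'
  have key : ∑ a ∈ univ.erase (0 : F),
      (∑ r ∈ range m, d r * (χ ^ r) a) * (χ ^ (m - r')) a = 0 :=
    Finset.sum_eq_zero fun a ha => by rw [h a (mem_erase.1 ha).1, zero_mul]
  have swap : ∑ a ∈ univ.erase (0 : F), (∑ r ∈ range m, d r * (χ ^ r) a) * (χ ^ (m - r')) a
      = ∑ r ∈ range m, d r * ∑ a ∈ univ.erase (0 : F), (χ ^ (r + (m - r'))) a := by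
    calc ∑ a ∈ univ.erase (0 : F), (∑ r ∈ range m, d r * (χ ^ r) a) * (χ ^ (m - r')) a
        = ∑ a ∈ univ.erase (0 : F), ∑ r ∈ range m, d r * (χ ^ (r + (m - r'))) a := by
          refine Finset.sum_congr rfl fun a _ => ?_
          rw [Finset.sum_mul]
          refine Finset.sum_congr rfl fun r _ => ?_
          rw [pow_add, MulChar.mul_apply]
          ring
      _ = ∑ r ∈ range m, ∑ a ∈ univ.erase (0 : F), d r * (χ ^ (r + (m - r'))) a :=
          Finset.sum_comm
      _ = ∑ r ∈ range m, d r * ∑ a ∈ univ.erase (0 : F), (χ ^ (r + (m - r'))) a := by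
          refine Finset.sum_congr rfl fun r _ => ?_
          rw [Finset.mul_sum]
  have eval : ∀ r ∈ range m, d r * (∑ a ∈ univ.erase (0 : F), (χ ^ (r + (m - r'))) a)
      = if r = r' then d r * ((Fintype.card F : ℂ) - 1) else 0 := by
    intro r hr
    rw [mem_range] at hr
    rw [innerSumAux χ hχ]
    by_cases hrr : r = r'
    · have e : r + (m - r') = m := by omega
      rw [if_pos hrr, if_pos (show m ∣ r + (m - r') by rw [e])]
    · rw [if_neg hrr, if_neg ?_, mul_zero]
      intro hdvd
      have := Nat.eq_of_dvd_of_lt_two_mul (by omega) hdvd (by omega)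
      omega
  rw [swap, Finset.sum_congr rfl eval, Finset.sum_ite_eq' (range m) r'
    (fun r => d r * ((Fintype.card F : ℂ) - 1)), if_pos (mem_range.2 hr')] at key
  have hq1 : ((Fintype.card F : ℂ) - 1) ≠ 0 := by
    rw [hcard]
    push_cast
    intro hc
    have h0 : (m : ℂ) * f = 0 := by linear_combination hc
    exact (mul_ne_zero (Nat.cast_ne_zero.2 hm.ne') (Nat.cast_ne_zero.2 hf.ne')) h0
  exact (mul_eq_zero.1 key).resolve_right hq1


lemma count_pairs (m : ℕ) (a : F) :
    (({x : F × F | x.1 ∈ Mset F m ∧ x.2 ∈ Mset F m ∧ x.1 - x.2 = a}.ncard : ℂ))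
      = ∑ y : F, (if y + a ∈ Mset F m then (1 : ℂ) else 0)
          * (if y ∈ Mset F m then (1 : ℂ) else 0) := by
  have h1 : {x : F × F | x.1 ∈ Mset F m ∧ x.2 ∈ Mset F m ∧ x.1 - x.2 = a}
      = ↑(Finset.univ.filter fun x : F × F =>
          x.1 ∈ Mset F m ∧ x.2 ∈ Mset F m ∧ x.1 - x.2 = a) := by
    ext x; simp
  rw [h1, Set.ncard_coe_finset]
  have h2 : (Finset.univ.filter fun x : F × F =>
        x.1 ∈ Mset F m ∧ x.2 ∈ Mset F m ∧ x.1 - x.2 = a).card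
      = (Finset.univ.filter fun y : F => y + a ∈ Mset F m ∧ y ∈ Mset F m).card := by
    refine Finset.card_nbij' (fun x => x.2) (fun y => (y + a, y)) ?_ ?_ ?_ ?_
    · intro x hx
      simp only [mem_coe, mem_filter, mem_univ, true_and] at hx ⊢
      have : x.1 = x.2 + a := by
        have := hx.2.2
        linear_combination this
      exact ⟨this ▸ hx.1, hx.2.1⟩
    · intro y hy
      simp only [mem_coe, mem_filter, mem_univ, true_and] at hy ⊢
      exact ⟨hy.1, hy.2, by ring⟩
    · intro x hx
      simp only [mem_coe, mem_filter, mem_univ, true_and] at hx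
      have : x.1 = x.2 + a := by linear_combination hx.2.2
      simp [← this]
    · intro y hy
      rfl
  rw [h2, Finset.natCast_card_filter]
  refine Finset.sum_congr rfl fun y _ => ?_
  by_cases h1 : y + a ∈ Mset F m <;> by_cases h2 : y ∈ Mset F m <;>
    simp [h1, h2]

lemma count_Mset (m : ℕ) :
    (((Mset F m).ncard : ℂ)) = ∑ x : F, (if x ∈ Mset F m then (1 : ℂ) else 0) := by
  have h1 : Mset F m = ↑(Finset.univ.filter fun x : F => x ∈ Mset F m) := by
    ext x; simp
  rw [h1, Set.ncard_coe_finset, Finset.natCast_card_filter]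
  simp
end Aux
section Master
variable {F : Type*} [Field F] [Fintype F]

noncomputable def Acoef (m : ℕ) (χ : MulChar F ℂ) (r : ℕ) : ℂ :=
  ∑ s ∈ Finset.range m, (χ ^ ((m + r - s) % m)) (-1)
    * jacobiSum (χ ^ ((m + r - s) % m)) (χ ^ s)

noncomputable def dcoef (m : ℕ) (χ : MulChar F ℂ) (r : ℕ) : ℂ :=
  (m : ℂ) * (1 + (χ ^ r) (-1)) + Acoef m χ r
    - (if r = 0 then ((Fintype.card F : ℂ) - 1 + (m : ℂ)) else 0)

lemma master {m : ℕ} (hm : 0 < m) (χ : MulChar F ℂ) (hχ : orderOf χ = m)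
    {a : F} (ha : a ≠ 0) :
    (m : ℂ) ^ 2 * (∑ y : F, (if y + a ∈ Mset F m then (1 : ℂ) else 0)
        * (if y ∈ Mset F m then (1 : ℂ) else 0))
      - ((Fintype.card F : ℂ) - 1 + (m : ℂ))
      = ∑ r ∈ range m, dcoef m χ r * (χ ^ r) a := by
  set P : F → ℂ := fun x => ∑ t ∈ range m, (χ ^ t) x with hP
  have key : ∀ x : F, (if x = 0 then (m : ℂ) else 0) + P x
      = (m : ℂ) * (if x ∈ Mset F m then (1 : ℂ) else 0) := by
    intro x
    rw [mul_ite, mul_one, mul_zero]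
    exact (indicator_eq hm χ hχ x).symm
  have step1 : (m : ℂ) ^ 2 * (∑ y : F, (if y + a ∈ Mset F m then (1 : ℂ) else 0)
        * (if y ∈ Mset F m then (1 : ℂ) else 0))
      = ∑ y : F, ((if y + a = 0 then (m : ℂ) else 0) + P (y + a))
          * ((if y = 0 then (m : ℂ) else 0) + P y) := by
    rw [mul_sum]
    refine Finset.sum_congr rfl fun y _ => ?_
    rw [key, key]
    ring
  have expand : ∑ y : F, ((if y + a = 0 then (m:ℂ) else 0) + P (y + a))
        * ((if y = 0 then (m:ℂ) else 0) + P y)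
      = (∑ y : F, (if y + a = 0 then (m:ℂ) else 0) * (if y = 0 then (m:ℂ) else 0))
        + (∑ y : F, (if y + a = 0 then (m:ℂ) else 0) * P y)
        + (∑ y : F, P (y + a) * (if y = 0 then (m:ℂ) else 0))
        + (∑ y : F, P (y + a) * P y) := by
    rw [← sum_add_distrib, ← sum_add_distrib, ← sum_add_distrib]
    exact Finset.sum_congr rfl fun y _ => by ring
  have S1 : (∑ y : F, (if y + a = 0 then (m:ℂ) else 0) * (if y = 0 then (m:ℂ) else 0)) = 0 := by
    refine Finset.sum_eq_zero fun y _ => ?_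
    by_cases h : y = 0
    · subst h; rw [zero_add, if_neg ha, zero_mul]
    · rw [if_neg h, mul_zero]
  have S2 : (∑ y : F, (if y + a = 0 then (m:ℂ) else 0) * P y) = (m:ℂ) * P (-a) := by
    have e : ∀ y : F, (if y + a = 0 then (m:ℂ) else 0) * P y
        = if y = -a then (m:ℂ) * P y else 0 := by
      intro y
      by_cases h : y = -a
      · rw [if_pos h, if_pos (by rw [h]; ring)]
      · rw [if_neg (fun hc => h (by linear_combination hc)), if_neg h, zero_mul]
    rw [Finset.sum_congr rfl fun y _ => e y,
      Finset.sum_ite_eq' univ (-a) (fun y => (m:ℂ) * P y), if_pos (mem_univ _)]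
  have S3 : (∑ y : F, P (y + a) * (if y = 0 then (m:ℂ) else 0)) = (m:ℂ) * P a := by
    have e : ∀ y : F, P (y + a) * (if y = 0 then (m:ℂ) else 0)
        = if y = 0 then P (y + a) * (m:ℂ) else 0 := by
      intro y; by_cases h : y = 0 <;> simp [h]
    rw [Finset.sum_congr rfl fun y _ => e y,
      Finset.sum_ite_eq' univ (0:F) (fun y => P (y + a) * (m:ℂ)), if_pos (mem_univ _), zero_add]
    ring
  have S4 : (∑ y : F, P (y + a) * P y)
      = ∑ s ∈ range m, ∑ t ∈ range m,
          (χ ^ t) (-1) * jacobiSum (χ ^ t) (χ ^ s) * (χ ^ ((s + t) % m)) a := by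
    have e1 : ∀ y : F, P (y + a) * P y
        = ∑ s ∈ range m, ∑ t ∈ range m, (χ ^ s) (y + a) * (χ ^ t) y := by
      intro y
      rw [hP]
      exact Finset.sum_mul_sum _ _ _ _
    rw [Finset.sum_congr rfl fun y _ => e1 y, Finset.sum_comm]
    refine Finset.sum_congr rfl fun s hs => ?_
    rw [Finset.sum_comm]
    refine Finset.sum_congr rfl fun t ht => ?_
    rw [gsum_eq ha (χ ^ s) (χ ^ t)]
    have h2 : (χ ^ t) (-a) = (χ ^ t) (-1) * (χ ^ t) a := by
      rw [show (-a : F) = (-1) * a by ring, map_mul]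
    have h3 : χ ^ ((s + t) % m) = χ ^ (s + t) := by
      have h4 := pow_mod_orderOf χ (s + t)
      rw [hχ] at h4
      exact h4
    rw [h2, h3, pow_add, MulChar.mul_apply]
    ring
  have S4b : ∀ s ∈ range m, (∑ t ∈ range m,
        (χ ^ t) (-1) * jacobiSum (χ ^ t) (χ ^ s) * (χ ^ ((s + t) % m)) a)
      = ∑ r ∈ range m, (χ ^ ((m + r - s) % m)) (-1)
          * jacobiSum (χ ^ ((m + r - s) % m)) (χ ^ s) * (χ ^ r) a := by
    intro s hs
    rw [mem_range] at hs
    refine Finset.sum_nbij' (fun t => (s + t) % m) (fun r => (m + r - s) % m)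
      (fun t ht => mem_range.2 (Nat.mod_lt _ hm))
      (fun r hr => mem_range.2 (Nat.mod_lt _ hm))
      (fun t ht => mod_c1 hm hs (mem_range.1 ht))
      (fun r hr => mod_c2 hm hs (mem_range.1 hr))
      (fun t ht => ?_)
    rw [mod_c1 hm hs (mem_range.1 ht)]
  have S4c : (∑ s ∈ range m, ∑ r ∈ range m, (χ ^ ((m + r - s) % m)) (-1)
        * jacobiSum (χ ^ ((m + r - s) % m)) (χ ^ s) * (χ ^ r) a)
      = ∑ r ∈ range m, Acoef m χ r * (χ ^ r) a := by
    rw [Finset.sum_comm]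
    refine Finset.sum_congr rfl fun r _ => ?_
    rw [Acoef, Finset.sum_mul]
  have step7 : (m:ℂ) * P (-a) + (m:ℂ) * P a
      = ∑ r ∈ range m, (m:ℂ) * (1 + (χ ^ r) (-1)) * (χ ^ r) a := by
    rw [hP]
    simp only
    rw [mul_sum, mul_sum, ← sum_add_distrib]
    refine Finset.sum_congr rfl fun r _ => ?_
    rw [show (-a : F) = (-1) * a by ring, map_mul]
    ring
  have step8 : ((Fintype.card F : ℂ) - 1 + (m:ℂ))
      = ∑ r ∈ range m, (if r = 0 then ((Fintype.card F : ℂ) - 1 + (m:ℂ)) else 0)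
          * (χ ^ r) a := by
    have e : ∀ r : ℕ, (if r = 0 then ((Fintype.card F : ℂ) - 1 + (m:ℂ)) else 0) * (χ ^ r) a
        = if r = 0 then ((Fintype.card F : ℂ) - 1 + (m:ℂ)) * (χ ^ r) a else 0 := by
      intro r; by_cases h : r = 0 <;> simp [h]
    rw [Finset.sum_congr rfl fun r _ => e r,
      Finset.sum_ite_eq' (range m) 0
        (fun r => ((Fintype.card F : ℂ) - 1 + (m:ℂ)) * (χ ^ r) a),
      if_pos (mem_range.2 hm), pow_zero, MulChar.one_apply (isUnit_iff_ne_zero.2 ha), mul_one]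
  rw [step1, expand, S1, S2, S3, zero_add, S4,
    Finset.sum_congr rfl S4b, S4c, step7]
  nth_rewrite 1 [step8]
  rw [← sum_add_distrib, ← sum_sub_distrib]
  refine Finset.sum_congr rfl fun r _ => ?_
  simp only [dcoef]
  ring
end Master
section Dcoef
variable {F : Type*} [Field F] [Fintype F]

lemma range_split {m : ℕ} (hm : 0 < m) : range m = insert 0 (Ico 1 m) := by
  ext x
  simp only [mem_range, mem_insert, mem_Ico]
  omega

lemma dcoef_zero {m : ℕ} (hm : 0 < m) (χ : MulChar F ℂ) (hχ : orderOf χ = m) :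
    dcoef m χ 0 = 0 := by
  have hA : Acoef m χ 0 = ((Fintype.card F : ℂ) - 2) - ((m : ℂ) - 1) := by
    rw [Acoef, range_split hm, Finset.sum_insert (by simp)]
    have h0 : (m + 0 - 0) % m = 0 := by
      rw [Nat.add_sub_cancel, Nat.mod_self]
    have hterm : ∀ s ∈ Ico 1 m, (χ ^ ((m + 0 - s) % m)) (-1)
        * jacobiSum (χ ^ ((m + 0 - s) % m)) (χ ^ s) = -1 := by
      intro s hs
      rw [mem_Ico] at hs
      have hτ : (m + 0 - s) % m = m - s := by
        rw [Nat.add_zero, Nat.mod_eq_of_lt (by omega)]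
      rw [hτ, chi_pow_inv χ hχ (le_of_lt hs.2)]
      have hne : (χ ^ s)⁻¹ ≠ 1 := inv_ne_one.2 (chi_pow_ne_one χ hχ hs.1 hs.2)
      have := jacobiSum_nontrivial_inv hne
      rw [inv_inv] at this
      rw [this]
      have := mulchar_neg_one_sq ((χ ^ s)⁻¹)
      linear_combination -this
    rw [Finset.sum_congr rfl hterm, Finset.sum_const, Nat.card_Ico, h0, pow_zero,
      MulChar.one_apply (IsUnit.neg isUnit_one), jacobiSum_one_one, one_mul, nsmul_eq_mul,
      Nat.cast_sub hm]
    push_cast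
    ring
  rw [dcoef, hA, if_pos rfl, pow_zero, MulChar.one_apply (IsUnit.neg isUnit_one)]
  ring

lemma dcoef_pos {m : ℕ} (hm : 0 < m) (χ : MulChar F ℂ) (hχ : orderOf χ = m)
    {r : ℕ} (hr1 : 1 ≤ r) (hrm : r < m) :
    dcoef m χ r = (m : ℂ) - 1 + (m : ℂ) * (χ ^ (m - r)) (-1)
      + ∑ t ∈ Ico 1 m, jacobiSum (χ ^ (m - r)) (χ ^ t) := by
  have hrmem : r ∈ Ico 1 m := mem_Ico.2 ⟨hr1, hrm⟩
  have hrne : χ ^ r ≠ 1 := chi_pow_ne_one χ hχ hr1 hrm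
  have hmr : χ ^ (m - r) = (χ ^ r)⁻¹ := chi_pow_inv χ hχ (le_of_lt hrm)
  have hmrne : χ ^ (m - r) ≠ 1 := by
    rw [hmr]; exact inv_ne_one.2 hrne
  -- value of h at s = 0
  have h0 : (χ ^ ((m + r - 0) % m)) (-1) * jacobiSum (χ ^ ((m + r - 0) % m)) (χ ^ 0)
      = -(χ ^ r) (-1) := by
    have e : (m + r - 0) % m = r := by
      rw [Nat.sub_zero, Nat.add_mod_left, Nat.mod_eq_of_lt hrm]
    rw [e, pow_zero, show (1 : MulChar F ℂ) = MulChar.trivial F ℂ from rfl]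
    rw [← show (1 : MulChar F ℂ) = MulChar.trivial F ℂ from rfl]
    rw [jacobiSum_comm, jacobiSum_one_nontrivial hrne]
    ring
  -- value of h at s = r
  have hr : (χ ^ ((m + r - r) % m)) (-1) * jacobiSum (χ ^ ((m + r - r) % m)) (χ ^ r)
      = -1 := by
    have e : (m + r - r) % m = 0 := by rw [Nat.add_sub_cancel, Nat.mod_self]
    rw [e, pow_zero, MulChar.one_apply (IsUnit.neg isUnit_one),
      jacobiSum_one_nontrivial hrne, one_mul]
  -- values on the rest
  have hrest : ∀ s ∈ (Ico 1 m).erase r,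
      (χ ^ ((m + r - s) % m)) (-1) * jacobiSum (χ ^ ((m + r - s) % m)) (χ ^ s)
        = jacobiSum (χ ^ (m - r)) (χ ^ ((m + r - s) % m)) := by
    intro s hs
    have hsmem := hs
    rw [mem_erase, mem_Ico] at hsmem
    have hτmem := tau_mem hm hr1 hrm hs
    rw [mem_erase, mem_Ico] at hτmem
    have hτs : χ ^ ((m + r - s) % m) * χ ^ s = χ ^ r := by
      rw [← pow_add]
      have e1 : χ ^ (((m + r - s) % m + s) % m) = χ ^ ((m + r - s) % m + s) := by
        have h4 := pow_mod_orderOf χ ((m + r - s) % m + s)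
        rwa [hχ] at h4
      rw [← e1]
      have e2 : ((m + r - s) % m + s) % m = r := by
        rw [Nat.add_comm]
        exact mod_c2 hm hsmem.2.2 hrm
      rw [e2]
    rw [jacobi_shift, hτs, ← hmr]
    have := mulchar_neg_one_sq (χ ^ ((m + r - s) % m))
    linear_combination (jacobiSum (χ ^ (m - r)) (χ ^ ((m + r - s) % m))) * this
  -- reindex the rest
  have hreindex : ∑ s ∈ (Ico 1 m).erase r,
      jacobiSum (χ ^ (m - r)) (χ ^ ((m + r - s) % m))
      = ∑ t ∈ (Ico 1 m).erase r, jacobiSum (χ ^ (m - r)) (χ ^ t) := by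
    refine Finset.sum_nbij' (fun s => (m + r - s) % m) (fun t => (m + r - t) % m)
      (fun s hs => tau_mem hm hr1 hrm hs) (fun t ht => tau_mem hm hr1 hrm ht)
      (fun s hs => tau_invol hm hr1 hrm hs) (fun t ht => tau_invol hm hr1 hrm ht)
      (fun s hs => rfl)
  -- the sum over the erased set
  have herase : ∑ t ∈ (Ico 1 m).erase r, jacobiSum (χ ^ (m - r)) (χ ^ t)
      = (∑ t ∈ Ico 1 m, jacobiSum (χ ^ (m - r)) (χ ^ t)) + (χ ^ (m - r)) (-1) := by
    have := Finset.add_sum_erase (Ico 1 m) (fun t => jacobiSum (χ ^ (m - r)) (χ ^ t)) hrmem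
    have hJ : jacobiSum (χ ^ (m - r)) (χ ^ r) = -(χ ^ (m - r)) (-1) := by
      have h5 : ((χ ^ (m - r))⁻¹ : MulChar F ℂ) = χ ^ r := by rw [hmr, inv_inv]
      rw [← h5]
      exact jacobiSum_nontrivial_inv hmrne
    linear_combination this - hJ
  -- assemble Acoef
  have hA : Acoef m χ r = -(χ ^ r) (-1) + (-1)
      + ((∑ t ∈ Ico 1 m, jacobiSum (χ ^ (m - r)) (χ ^ t)) + (χ ^ (m - r)) (-1)) := by
    rw [Acoef, range_split hm, Finset.sum_insert (by simp),
      ← Finset.add_sum_erase (Ico 1 m) _ hrmem,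
      Finset.sum_congr rfl hrest, hreindex, herase, h0, hr]
    ring
  -- equality of the two sign characters
  have hcc : (χ ^ (m - r)) (-1) = (χ ^ r) (-1) := by
    have h1 : (χ ^ (m - r)) (-1) * (χ ^ r) (-1) = 1 := by
      rw [← MulChar.mul_apply, ← pow_add]
      have e : m - r + r = m := by omega
      rw [e, ← hχ, pow_orderOf_eq_one, MulChar.one_apply (IsUnit.neg isUnit_one)]
    have h2 := mulchar_neg_one_sq (χ ^ r)
    linear_combination ((χ ^ r) (-1)) * h1 - ((χ ^ (m-r)) (-1)) * h2
  rw [dcoef, hA, if_neg (by omega), hcc]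
  ring
end Dcoef
section Final
variable {F : Type*} [Field F] [Fintype F]

lemma Mset_ncard {m f : ℕ} (hm : 0 < m) (hcard : Fintype.card F = m * f + 1)
    (χ : MulChar F ℂ) (hχ : orderOf χ = m) : (Mset F m).ncard = f + 1 := by
  have h1 : (m : ℂ) * ((Mset F m).ncard : ℂ) = (m : ℂ) * ((f : ℂ) + 1) := by
    rw [count_Mset m, mul_sum]
    calc ∑ x : F, (m : ℂ) * (if x ∈ Mset F m then 1 else 0)
        = ∑ x : F, ((if x = 0 then (m : ℂ) else 0) + ∑ t ∈ range m, (χ ^ t) x) := by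
          refine Finset.sum_congr rfl fun x _ => ?_
          rw [mul_ite, mul_one, mul_zero]
          exact indicator_eq hm χ hχ x
      _ = (∑ x : F, (if x = 0 then (m : ℂ) else 0)) + ∑ x : F, ∑ t ∈ range m, (χ ^ t) x :=
          Finset.sum_add_distrib
      _ = (m : ℂ) + ∑ t ∈ range m, ∑ x : F, (χ ^ t) x := by
          rw [Finset.sum_ite_eq' univ (0 : F) (fun _ => (m : ℂ)), if_pos (mem_univ _),
            Finset.sum_comm]
      _ = (m : ℂ) + ((Fintype.card F : ℂ) - 1) := by
          congr 1
          rw [range_split hm, Finset.sum_insert (by simp)]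
          have h2 : ∑ x : F, (χ ^ 0) x = ((Fintype.card F : ℂ) - 1) := by
            rw [pow_zero, MulChar.sum_one_eq_card_units, Fintype.card_units,
              Nat.cast_sub (Nat.one_le_iff_ne_zero.2 Fintype.card_ne_zero)]
            norm_num
          have h3 : ∀ t ∈ Ico 1 m, ∑ x : F, (χ ^ t) x = 0 := by
            intro t ht
            rw [mem_Ico] at ht
            exact MulChar.sum_eq_zero_of_ne_one (chi_pow_ne_one χ hχ ht.1 ht.2)
          rw [Finset.sum_congr rfl h3, Finset.sum_const, smul_zero, add_zero, h2]
      _ = (m : ℂ) * ((f : ℂ) + 1) := by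
          rw [hcard]
          push_cast
          ring
  have hm0 : (m : ℂ) ≠ 0 := Nat.cast_ne_zero.2 hm.ne'
  have h2 := mul_left_cancel₀ hm0 h1
  exact_mod_cast h2
end Final

theorem stmt4 (p m f l : ℕ) (hp : p.Prime) (hm : 0 < m) (hf : 0 < f)
    (F : Type*) [Field F] [Fintype F]
    (hq : ∃ n : ℕ, 0 < n ∧ Fintype.card F = p ^ n)
    (hcard : Fintype.card F = m * f + 1)
    (hlf : f + 1 = l * m)
    (χ : MulChar F ℂ) (hχ : orderOf χ = m) :
    IsDiffSet (Mset F m) (f + 1) l ↔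
      ∀ s : ℕ, 1 ≤ s → s ≤ m - 1 →
        ∑ t ∈ Finset.Icc 1 (m - 1), Jsum (χ ^ s) (χ ^ t)
          = 1 - (m : ℂ) - (m : ℂ) * (χ ^ s) (-1) := by
  classical
  have hq1 : (Fintype.card F : ℂ) = (m : ℂ) * (f : ℂ) + 1 := by
    exact_mod_cast congrArg (Nat.cast (R := ℂ)) hcard
  have hlf' : (f : ℂ) + 1 = (l : ℂ) * (m : ℂ) := by
    exact_mod_cast congrArg (Nat.cast (R := ℂ)) hlf
  have hml : (m : ℂ) ^ 2 * (l : ℂ) = (Fintype.card F : ℂ) - 1 + (m : ℂ) := by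
    linear_combination -hq1 - (m : ℂ) * hlf'
  have hMs : (Mset F m).ncard = f + 1 := Mset_ncard hm hcard χ hχ
  have hIcc : Finset.Icc 1 (m - 1) = Finset.Ico 1 m := by
    rw [← Finset.Ico_add_one_right_eq_Icc]
    congr 1
    omega
  constructor
  · rintro ⟨_, hN⟩ s hs1 hs2
    have hvanish : ∀ a : F, a ≠ 0 → ∑ r ∈ range m, dcoef m χ r * (χ ^ r) a = 0 := by
      intro a ha
      rw [← master hm χ hχ ha]
      have hNc : (({x : F × F | x.1 ∈ Mset F m ∧ x.2 ∈ Mset F m ∧ x.1 - x.2 = a}.ncard : ℂ))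
          = (l : ℂ) := by exact_mod_cast hN a ha
      have hSl : (∑ y : F, (if y + a ∈ Mset F m then (1 : ℂ) else 0)
          * (if y ∈ Mset F m then (1 : ℂ) else 0)) = (l : ℂ) :=
        (count_pairs m a).symm.trans hNc
      linear_combination (m : ℂ) ^ 2 * hSl + hml
    have hzero := coeff_extract hm hf hcard χ hχ _ hvanish
    have hr1 : 1 ≤ m - s := by omega
    have hrm : m - s < m := by omega
    have hd := hzero (m - s) (mem_range.2 hrm)
    rw [dcoef_pos hm χ hχ hr1 hrm, show m - (m - s) = s by omega] at hd
    rw [hIcc]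
    simp only [Jsum_eq_jacobiSum]
    linear_combination hd
  · intro hJ
    refine ⟨hMs, ?_⟩
    intro a ha
    have hzero : ∀ r ∈ range m, dcoef m χ r = 0 := by
      intro r hrr
      rw [mem_range] at hrr
      rcases Nat.eq_zero_or_pos r with rfl | hrpos
      · exact dcoef_zero hm χ hχ
      · rw [dcoef_pos hm χ hχ hrpos hrr]
        have hd := hJ (m - r) (by omega) (by omega)
        simp only [Jsum_eq_jacobiSum] at hd
        rw [hIcc] at hd
        linear_combination hd
    have hvanish : ∑ r ∈ range m, dcoef m χ r * (χ ^ r) a = 0 :=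
      Finset.sum_eq_zero fun r hrr => by rw [hzero r hrr, zero_mul]
    have hmaster := master hm χ hχ ha
    rw [hvanish] at hmaster
    have hcount := count_pairs m a
    have hm2 : ((m : ℂ) ^ 2) ≠ 0 := pow_ne_zero _ (Nat.cast_ne_zero.2 hm.ne')
    have hfinal : (({x : F × F | x.1 ∈ Mset F m ∧ x.2 ∈ Mset F m ∧ x.1 - x.2 = a}.ncard : ℂ))
        = (l : ℂ) := by
      apply mul_left_cancel₀ hm2
      rw [hcount]
      linear_combination hmaster - hml
    exact_mod_cast hfinal
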